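/- Under the hypotheses of the previous transport identity, if K: 𝕋^{d-1}×𝕋^ℓ → U satisfies the invariance φ_T(K(θ,φ),φ) = K(θ+ω, φ+α), then the vector field on the torus X_H^K(θ,φ) := X_H(K(θ,φ),φ) − D_φK(θ,φ)·α̂ is invariant under the linearized time-T map: D_zφ_T(K(θ,φ),φ)·X_H^K(θ,φ) = X_H^K(θ+ω, φ+α), where α = α̂T. -/

import Mathlib

/-- invariance under the linearized time-`T` map of the adapted
vector field `X_H^K(θ,φ) = X_H(K(θ,φ),φ) − D_φK(θ,φ)·α̂` on an invariant torus:
`D_zφ_T(K(θ,φ),φ)·X_H^K(θ,φ) = X_H^K(θ+ω, φ+α)` with `α = T·α̂`. -/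
theorem adapted_vector_field_invariance
    (N m ℓ : ℕ) (T : ℝ) (αhat : Fin ℓ → ℝ) (ω : Fin m → ℝ)
    (XH : (Fin N → ℝ) → (Fin ℓ → ℝ) → (Fin N → ℝ))
    (hXH : Continuous fun q : (Fin N → ℝ) × (Fin ℓ → ℝ) => XH q.1 q.2)
    (ev : ℝ → ((Fin N → ℝ) × (Fin ℓ → ℝ)) → (Fin N → ℝ))
    (h0 : ∀ p : (Fin N → ℝ) × (Fin ℓ → ℝ), ev 0 p = p.1)
    (hode : ∀ (t : ℝ) (p : (Fin N → ℝ) × (Fin ℓ → ℝ)),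
      HasDerivAt (fun s => ev s p) (XH (ev t p) (p.2 + t • αhat)) t)
    (hdiff : Differentiable ℝ (ev T))
    (hcomm : ∀ (t : ℝ) (z : Fin N → ℝ) (φv : Fin ℓ → ℝ),
      ev T (ev t (z, φv), φv + t • αhat) = ev t (ev T (z, φv), φv + T • αhat))
    (K : (Fin m → ℝ) × (Fin ℓ → ℝ) → (Fin N → ℝ)) (hK : ContDiff ℝ 1 K)
    (hinv : ∀ (θ : Fin m → ℝ) (φv : Fin ℓ → ℝ),
      ev T (K (θ, φv), φv) = K (θ + ω, φv + T • αhat)) :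
    ∀ (θ : Fin m → ℝ) (φv : Fin ℓ → ℝ),
      fderiv ℝ (fun z => ev T (z, φv)) (K (θ, φv))
          (XH (K (θ, φv)) φv - fderiv ℝ (fun φ' => K (θ, φ')) φv αhat)
        = XH (K (θ + ω, φv + T • αhat)) (φv + T • αhat)
          - fderiv ℝ (fun φ' => K (θ + ω, φ')) (φv + T • αhat) αhat := by
  intro θ φv
  have hKd : Differentiable ℝ K := hK.differentiable one_ne_zero
  set D := fderiv ℝ (ev T) (K (θ, φv), φv) with hD
  have hDT : HasFDerivAt (ev T) D (K (θ, φv), φv) := (hdiff _).hasFDerivAt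
  -- derivative of t ↦ φv + t • αhat
  have h2 : ∀ c : Fin ℓ → ℝ, HasDerivAt (fun t : ℝ => c + t • αhat) αhat 0 := by
    intro c
    simpa using (((hasDerivAt_id (0:ℝ)).smul_const αhat).const_add c)
  -- partial derivative of K in φ
  have hKφ : ∀ (θ' : Fin m → ℝ) (φ' : Fin ℓ → ℝ),
      HasFDerivAt (fun x => K (θ', x)) (fderiv ℝ (fun x => K (θ', x)) φ') φ' := by
    intro θ' φ'
    exact (hKd.comp ((differentiable_const θ').prodMk differentiable_id) φ').hasFDerivAt
  -- ===== Equation A =====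
  have curveA : HasDerivAt (fun t : ℝ => (ev t (K (θ, φv), φv), φv + t • αhat))
      (XH (K (θ, φv)) φv, αhat) 0 := by
    have h1 := hode 0 (K (θ, φv), φv)
    rw [h0, zero_smul, add_zero] at h1
    exact h1.prodMk (h2 φv)
  have hDT1 : HasFDerivAt (ev T) D (ev 0 (K (θ, φv), φv), φv + (0:ℝ) • αhat) := by
    rw [h0, zero_smul, add_zero]; exact hDT
  have hA1 : HasDerivAt (fun t : ℝ => ev T (ev t (K (θ, φv), φv), φv + t • αhat))
      (D (XH (K (θ, φv)) φv, αhat)) 0 := hDT1.comp_hasDerivAt 0 curveA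
  have hfunA : (fun t : ℝ => ev T (ev t (K (θ, φv), φv), φv + t • αhat))
      = fun t : ℝ => ev t (K (θ + ω, φv + T • αhat), φv + T • αhat) := by
    funext t; rw [hcomm t (K (θ, φv)) φv, hinv]
  rw [hfunA] at hA1
  have hA2 : HasDerivAt (fun t : ℝ => ev t (K (θ + ω, φv + T • αhat), φv + T • αhat))
      (XH (K (θ + ω, φv + T • αhat)) (φv + T • αhat)) 0 := by
    have h1 := hode 0 (K (θ + ω, φv + T • αhat), φv + T • αhat)
    rwa [h0, zero_smul, add_zero] at h1
  have eqA : D (XH (K (θ, φv)) φv, αhat)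
      = XH (K (θ + ω, φv + T • αhat)) (φv + T • αhat) := hA1.unique hA2
  -- ===== Equation B =====
  have curveBin : HasDerivAt (fun t : ℝ => K (θ, φv + t • αhat))
      (fderiv ℝ (fun x => K (θ, x)) φv αhat) 0 := by
    have hF : HasFDerivAt (fun x => K (θ, x)) (fderiv ℝ (fun x => K (θ, x)) φv)
        (φv + (0:ℝ) • αhat) := by
      rw [zero_smul, add_zero]; exact hKφ θ φv
    exact hF.comp_hasDerivAt 0 (h2 φv)
  have curveB : HasDerivAt (fun t : ℝ => (K (θ, φv + t • αhat), φv + t • αhat))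
      (fderiv ℝ (fun x => K (θ, x)) φv αhat, αhat) 0 := curveBin.prodMk (h2 φv)
  have hDT2 : HasFDerivAt (ev T) D (K (θ, φv + (0:ℝ) • αhat), φv + (0:ℝ) • αhat) := by
    rw [zero_smul, add_zero]; exact hDT
  have hB1 : HasDerivAt (fun t : ℝ => ev T (K (θ, φv + t • αhat), φv + t • αhat))
      (D (fderiv ℝ (fun x => K (θ, x)) φv αhat, αhat)) 0 := hDT2.comp_hasDerivAt 0 curveB
  have hfunB : (fun t : ℝ => ev T (K (θ, φv + t • αhat), φv + t • αhat))
      = fun t : ℝ => K (θ + ω, (φv + T • αhat) + t • αhat) := by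
    funext t; rw [hinv θ (φv + t • αhat)]
    ring_nf
  rw [hfunB] at hB1
  have hB2 : HasDerivAt (fun t : ℝ => K (θ + ω, (φv + T • αhat) + t • αhat))
      (fderiv ℝ (fun x => K (θ + ω, x)) (φv + T • αhat) αhat) 0 := by
    have hF : HasFDerivAt (fun x => K (θ + ω, x))
        (fderiv ℝ (fun x => K (θ + ω, x)) (φv + T • αhat))
        ((φv + T • αhat) + (0:ℝ) • αhat) := by
      rw [zero_smul, add_zero]; exact hKφ (θ + ω) (φv + T • αhat)
    exact hF.comp_hasDerivAt 0 (h2 (φv + T • αhat))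
  have eqB : D (fderiv ℝ (fun x => K (θ, x)) φv αhat, αhat)
      = fderiv ℝ (fun x => K (θ + ω, x)) (φv + T • αhat) αhat := hB1.unique hB2
  -- ===== partial-z derivative of ev T =====
  have hin : HasFDerivAt (fun z : Fin N → ℝ => (z, φv))
      ((ContinuousLinearMap.id ℝ (Fin N → ℝ)).prod 0) (K (θ, φv)) :=
    (hasFDerivAt_id _).prodMk (hasFDerivAt_const _ _)
  have hpart : HasFDerivAt (fun z => ev T (z, φv))
      (D.comp ((ContinuousLinearMap.id ℝ (Fin N → ℝ)).prod 0)) (K (θ, φv)) :=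
    hDT.comp (K (θ, φv)) hin
  rw [hpart.fderiv]
  have : (D.comp ((ContinuousLinearMap.id ℝ (Fin N → ℝ)).prod 0))
      (XH (K (θ, φv)) φv - fderiv ℝ (fun φ' => K (θ, φ')) φv αhat)
      = D ((XH (K (θ, φv)) φv, αhat) - (fderiv ℝ (fun x => K (θ, x)) φv αhat, αhat)) := by
    simp [ContinuousLinearMap.comp_apply, Prod.mk_sub_mk]
  rw [this, map_sub, eqA, eqB]
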